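/- Let M be a topological space that is the compactly retractive union of a directed family (M_α)_{α∈A} of subspaces with continuous inclusion maps. Then for every k ∈ ℕ₀ and every commutative ring R, the singular homology module H_k(M; R) is the direct limit of the modules H_k(M_α; R), via the inclusion-induced maps. -/

import Mathlib

open Set CategoryTheory

/-- The `k`-th singular homology functor with coefficients in a commutative ring `R`:
homology of the complex of singular chains (free `R`-modules on the singular
simplicial set). -/
noncomputable def singularHomologyFunctor (R : Type) [CommRing R] (k : ℕ) :
    TopCat.{0} ⥤ ModuleCat.{0} R :=
  TopCat.toSSet ⋙ ((SimplicialObject.whiskering _ _).obj (ModuleCat.free R)) ⋙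
    AlgebraicTopology.alternatingFaceMapComplex _ ⋙
    HomologicalComplex.homologyFunctor _ _ k

/-- The singular chain complex functor. -/
noncomputable def chainF (R : Type) [CommRing R] :
    TopCat.{0} ⥤ ChainComplex (ModuleCat.{0} R) ℕ :=
  TopCat.toSSet ⋙ ((SimplicialObject.whiskering _ _).obj (ModuleCat.free R)) ⋙
    AlgebraicTopology.alternatingFaceMapComplex _

instance (x : SimplexCategory) : CompactSpace (SimplexCategory.toTop₀.obj x) := by
  show CompactSpace (stdSimplex ℝ (Fin (x.len + 1)))
  infer_instance

instance (y : SimplexCategory) : CompactSpace (SimplexCategory.toTop.obj y) :=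
  inferInstanceAs (CompactSpace (ULift (SimplexCategory.toTop₀.obj y)))

lemma aux_pi_surj {R : Type} [CommRing R] {K : ChainComplex (ModuleCat R) ℕ} (k : ℕ)
    (z : K.homology k) : ∃ x, K.homologyπ k x = z :=
  (ModuleCat.epi_iff_surjective _).1 inferInstance z

lemma aux_cyclesMk {R : Type} [CommRing R] {K : ChainComplex (ModuleCat R) ℕ} (k : ℕ)
    (x : K.X k) (hx : K.d k ((ComplexShape.down ℕ).next k) x = 0) :
    ∃ y : K.cycles k, K.iCycles k y = x :=
  ⟨(K.sc k).moduleCatCyclesIso.inv ⟨x, hx⟩,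
    (K.sc k).moduleCatCyclesIso_inv_iCycles_apply ⟨x, hx⟩⟩

lemma aux_pi_eq {R : Type} [CommRing R] {K : ChainComplex (ModuleCat R) ℕ} (k : ℕ)
    (x y : K.cycles k) :
    K.homologyπ k x = K.homologyπ k y ↔
      ∃ w : K.X ((ComplexShape.down ℕ).prev k),
        K.d ((ComplexShape.down ℕ).prev k) k w = K.iCycles k x - K.iCycles k y := by
  set Sc := K.sc k with hSc
  have hinj : Function.Injective Sc.moduleCatHomologyIso.hom :=
    (ModuleCat.mono_iff_injective _).1 inferInstance
  have key : ∀ u : K.cycles k, Sc.moduleCatHomologyIso.hom (K.homologyπ k u) =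
      Sc.moduleCatLeftHomologyData.π (Sc.moduleCatCyclesIso.hom u) := fun u =>
    ConcreteCategory.congr_hom Sc.π_moduleCatCyclesIso_hom u
  have hsub : ∀ u : K.cycles k,
      (Sc.moduleCatCyclesIso.hom u).1 = K.iCycles k u := fun u =>
    ConcreteCategory.congr_hom Sc.moduleCatCyclesIso_hom_i u
  have hq : ∀ u v : Sc.moduleCatLeftHomologyData.K,
      Sc.moduleCatLeftHomologyData.π u = Sc.moduleCatLeftHomologyData.π v ↔
        u - v ∈ LinearMap.range Sc.moduleCatToCycles := fun u v => by
    show Submodule.Quotient.mk u = Submodule.Quotient.mk v ↔ _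
    exact Submodule.Quotient.eq _
  constructor
  · intro h
    have h2 := congrArg Sc.moduleCatHomologyIso.hom h
    rw [key, key, hq] at h2
    obtain ⟨w, hw⟩ := h2
    refine ⟨w, ?_⟩
    have h3 := congrArg Subtype.val hw
    erw [AddSubgroupClass.coe_sub] at h3
    rw [← hsub, ← hsub]
    exact h3
  · rintro ⟨w, hw⟩
    apply hinj
    rw [key, key, hq]
    refine ⟨w, Subtype.ext ?_⟩
    show Sc.f w = _
    erw [AddSubgroupClass.coe_sub, hsub, hsub]
    exact hw

lemma aux_pi_nat {R : Type} [CommRing R] {K L : ChainComplex (ModuleCat R) ℕ} (φ : K ⟶ L)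
    (k : ℕ) (x : K.cycles k) :
    HomologicalComplex.homologyMap φ k (K.homologyπ k x) =
      L.homologyπ k (HomologicalComplex.cyclesMap φ k x) :=
  ConcreteCategory.congr_hom (HomologicalComplex.homologyπ_naturality φ k) x

lemma aux_i_nat {R : Type} [CommRing R] {K L : ChainComplex (ModuleCat R) ℕ} (φ : K ⟶ L)
    (k : ℕ) (x : K.cycles k) :
    L.iCycles k (HomologicalComplex.cyclesMap φ k x) = φ.f k (K.iCycles k x) :=
  ConcreteCategory.congr_hom (HomologicalComplex.cyclesMap_i φ k) x

lemma aux_i_inj {R : Type} [CommRing R] {K : ChainComplex (ModuleCat R) ℕ} (k : ℕ)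
    (x y : K.cycles k) (h : K.iCycles k x = K.iCycles k y) : x = y :=
  (ModuleCat.mono_iff_injective (K.iCycles k)).1 inferInstance h

lemma chainF_map_inj (R : Type) [CommRing R] {X Y : TopCat.{0}} (f : X ⟶ Y)
    (hf : Function.Injective ⇑f) (n : ℕ) :
    Function.Injective ⇑(((chainF R).map f).f n) := by
  have h : ⇑(((chainF R).map f).f n) =
      Finsupp.mapDomain (fun σ : ULift (SimplexCategory.toTop.obj (SimplexCategory.mk n) ⟶ X) =>
        ULift.up (σ.down ≫ f)) := rfl
  rw [h]
  apply Finsupp.mapDomain_injective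
  intro σ σ' hσ
  apply ULift.ext
  apply ConcreteCategory.hom_ext
  intro t
  exact hf (congrFun (congrArg (fun (g : ULift (SimplexCategory.toTop.obj (SimplexCategory.mk n) ⟶ Y))
    => ⇑g.down) hσ) t)

section Lift
variable {M : Type} [TopologicalSpace M] {A : Type} [Preorder A]
  (S : A → Set M) (hmono : Monotone S) (τ : ∀ a, TopologicalSpace (S a))
  (hincl : ∀ a, @Continuous _ _ (τ a) _ (fun x : S a => (x : M)))
  (hinclab : ∀ a b (hab : a ≤ b), @Continuous _ _ (τ a) (τ b) (Set.inclusion (hmono hab)))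
  (hcr : ∀ K : Set M, IsCompact K → ∃ a, ∃ hKa : K ⊆ S a,
      (inferInstance : TopologicalSpace K) =
        TopologicalSpace.induced (Set.inclusion hKa) (τ a))

lemma liftSimplex {s₁ s₂ : Set M}
    (τ₁ : TopologicalSpace s₁) (τ₂ : TopologicalSpace s₂)
    {K : Set M} (hK : K ⊆ s₁)
    (htop : (inferInstance : TopologicalSpace K) = TopologicalSpace.induced (Set.inclusion hK) τ₁)
    (h12 : s₁ ⊆ s₂) (hcont : @Continuous _ _ τ₁ τ₂ (Set.inclusion h12))
    {Δ : Type} [TopologicalSpace Δ] (σ : C(Δ, M)) (hσ : Set.range σ ⊆ K) :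
    ∃ σ' : @ContinuousMap Δ s₂ _ τ₂, ∀ t, (σ' t : M) = σ t := by
  have hg : Continuous (fun t : Δ => (⟨σ t, hσ ⟨t, rfl⟩⟩ : K)) :=
    Continuous.codRestrict σ.continuous _
  have hincl : @Continuous _ _ _ τ₁ (Set.inclusion hK) := by
    rw [@continuous_iff_le_induced _ _ _ _ τ₁, ← htop]
  exact ⟨@ContinuousMap.mk _ _ _ τ₂
    (fun t => Set.inclusion h12 (Set.inclusion hK ⟨σ t, hσ ⟨t, rfl⟩⟩))
    (hcont.comp (hincl.comp hg)), fun t => rfl⟩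

lemma liftChain (R : Type) [CommRing R] {T T' : Type} (g : T' → T) (x : T →₀ R)
    (h : ∀ σ ∈ x.support, ∃ σ', g σ' = σ) : ∃ x', Finsupp.mapDomain g x' = x := by
  refine ⟨∑ σ ∈ x.support.attach, Finsupp.single (h σ.1 σ.2).choose (x σ.1), ?_⟩
  rw [show (Finsupp.mapDomain g : (T' →₀ R) → (T →₀ R)) = Finsupp.lmapDomain R R g from rfl,
    map_sum]
  have heq : ∀ σ ∈ x.support.attach,
      (Finsupp.lmapDomain R R g) (Finsupp.single (h σ.1 σ.2).choose (x σ.1)) =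
        Finsupp.single σ.1 (x σ.1) := by
    intro σ _
    rw [Finsupp.lmapDomain_apply, Finsupp.mapDomain_single, (h σ.1 σ.2).choose_spec]
  rw [Finset.sum_congr rfl heq, Finset.sum_attach x.support (fun σ => Finsupp.single σ (x σ))]
  exact Finsupp.sum_single x

include hmono hincl hinclab hcr in
lemma exists_lift (R : Type) [CommRing R] (n : ℕ)
    (x : ULift.{0} (SimplexCategory.toTop.obj (SimplexCategory.mk n) ⟶ TopCat.of M) →₀ R) :
    ∃ a, ∀ c, a ≤ c →
      ∃ x' : ULift.{0} (SimplexCategory.toTop.obj (SimplexCategory.mk n) ⟶ @TopCat.of (S c) (τ c)) →₀ R,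
        Finsupp.mapDomain (fun σ' => ULift.up (σ'.down ≫
          (@TopCat.ofHom _ _ (τ c) _ (@ContinuousMap.mk _ _ (τ c) _ (fun t : S c => (t : M)) (hincl c))))) x' = x := by
  have hcomp : IsCompact (⋃ σ ∈ x.support, Set.range ⇑σ.down) :=
    x.support.finite_toSet.isCompact_biUnion fun σ _ => isCompact_range σ.down.hom.continuous
  obtain ⟨a, hKa, htop⟩ := hcr _ hcomp
  refine ⟨a, fun c hac => ?_⟩
  apply liftChain
  intro σ hσ
  have hr : Set.range ⇑σ.down ⊆ ⋃ σ ∈ x.support, Set.range ⇑σ.down :=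
    Set.subset_iUnion₂
      (s := fun (σ : ULift.{0} (SimplexCategory.toTop.obj (SimplexCategory.mk n) ⟶ TopCat.of M)) _ =>
        Set.range ⇑σ.down) σ hσ
  obtain ⟨σ', hσ'⟩ := liftSimplex (τ a) (τ c) hKa htop (hmono hac) (hinclab a c hac) σ.down.hom hr
  exact ⟨ULift.up (@TopCat.ofHom _ _ _ (τ c) σ'), ULift.ext _ _ (ConcreteCategory.hom_ext _ _ hσ')⟩

end Lift

/-- For a compactly retractive directed union `M = ⋃ α, M_α` of topological
spaces (with continuous inclusion maps), every commutative ring `R` and every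
`k ∈ ℕ`, the singular homology module `H_k(M; R)` is the direct limit of the
modules `H_k(M_α; R)` via the inclusion-induced maps: every class comes from a
step, and classes from steps that agree in `H_k(M; R)` agree in a later step. -/
theorem singularHomology_of_compactly_retractive_union
    {M : Type} [TopologicalSpace M] {A : Type} [Preorder A] [IsDirected A (· ≤ ·)]
    (S : A → Set M) (hmono : Monotone S) (hunion : ⋃ a, S a = univ)
    (τ : ∀ a, TopologicalSpace (S a))
    (hincl : ∀ a, @Continuous _ _ (τ a) _ (fun x : S a => (x : M)))
    (hinclab : ∀ a b (hab : a ≤ b), @Continuous _ _ (τ a) (τ b) (Set.inclusion (hmono hab)))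
    (hcr : ∀ K : Set M, IsCompact K → ∃ a, ∃ hKa : K ⊆ S a,
      (inferInstance : TopologicalSpace K) =
        TopologicalSpace.induced (Set.inclusion hKa) (τ a))
    (R : Type) [CommRing R] (k : ℕ) :
    (∀ z : (singularHomologyFunctor R k).obj (TopCat.of M), ∃ a,
      ∃ w : (singularHomologyFunctor R k).obj (@TopCat.of (S a) (τ a)),
        ((singularHomologyFunctor R k).map
          (X := @TopCat.of (S a) (τ a)) (Y := TopCat.of M)
          (@TopCat.ofHom _ _ (τ a) _ (@ContinuousMap.mk _ _ (τ a) _ (fun x : S a => (x : M)) (hincl a)))) w = z) ∧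
    (∀ a b, ∀ x : (singularHomologyFunctor R k).obj (@TopCat.of (S a) (τ a)),
      ∀ y : (singularHomologyFunctor R k).obj (@TopCat.of (S b) (τ b)),
      ((singularHomologyFunctor R k).map
          (X := @TopCat.of (S a) (τ a)) (Y := TopCat.of M)
          (@TopCat.ofHom _ _ (τ a) _ (@ContinuousMap.mk _ _ (τ a) _ (fun x : S a => (x : M)) (hincl a)))) x =
        ((singularHomologyFunctor R k).map
          (X := @TopCat.of (S b) (τ b)) (Y := TopCat.of M)
          (@TopCat.ofHom _ _ (τ b) _ (@ContinuousMap.mk _ _ (τ b) _ (fun x : S b => (x : M)) (hincl b)))) y →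
      ∃ c, ∃ hac : a ≤ c, ∃ hbc : b ≤ c,
        ((singularHomologyFunctor R k).map
          (X := @TopCat.of (S a) (τ a)) (Y := @TopCat.of (S c) (τ c))
          (@TopCat.ofHom _ _ (τ a) (τ c) (@ContinuousMap.mk _ _ (τ a) (τ c) (Set.inclusion (hmono hac)) (hinclab a c hac)))) x =
          ((singularHomologyFunctor R k).map
            (X := @TopCat.of (S b) (τ b)) (Y := @TopCat.of (S c) (τ c))
            (@TopCat.ofHom _ _ (τ b) (τ c) (@ContinuousMap.mk _ _ (τ b) (τ c) (Set.inclusion (hmono hbc)) (hinclab b c hbc)))) y) := by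
  -- abbreviations
  let CM : ChainComplex (ModuleCat R) ℕ := (chainF R).obj (TopCat.of M)
  let Xc : A → TopCat.{0} := fun c => @TopCat.of (S c) (τ c)
  let ι : ∀ c, Xc c ⟶ TopCat.of M := fun c =>
    @TopCat.ofHom _ _ (τ c) _ (@ContinuousMap.mk _ _ (τ c) _ (fun t : S c => (t : M)) (hincl c))
  let φ : ∀ c, (chainF R).obj (Xc c) ⟶ CM := fun c => (chainF R).map (ι c)
  have hιinj : ∀ c, Function.Injective ⇑(ι c) := fun c u v huv => Subtype.ext (show (u : M) = v from huv)
  have hφinj : ∀ c n, Function.Injective ⇑((φ c).f n) := fun c n =>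
    chainF_map_inj R (ι c) (hιinj c) n
  constructor
  · -- surjectivity
    intro z
    obtain ⟨xx, hxx⟩ := aux_pi_surj (K := CM) k z
    have hxd : CM.d k ((ComplexShape.down ℕ).next k) (CM.iCycles k xx) = 0 := by
      have := ConcreteCategory.congr_hom (ShortComplex.iCycles_g (CM.sc k)) xx
      exact this
    obtain ⟨a, hlift⟩ := exists_lift S hmono τ hincl hinclab hcr R k (CM.iCycles k xx)
    obtain ⟨x', hx'⟩ := hlift a le_rfl
    have hx'2 : (φ a).f k x' = CM.iCycles k xx := hx'
    have hx'd : ((chainF R).obj (Xc a)).d k ((ComplexShape.down ℕ).next k) x' = 0 := by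
      apply hφinj a ((ComplexShape.down ℕ).next k)
      have hcomm := ConcreteCategory.congr_hom
        (HomologicalComplex.Hom.comm (φ a) k ((ComplexShape.down ℕ).next k)) x'
      -- hcomm : CM.d _ _ ((φ a).f k x') = (φ a).f _ (Ca.d _ _ x')  (up to order)
      rw [map_zero]
      calc ((φ a).f ((ComplexShape.down ℕ).next k))
            (((chainF R).obj (Xc a)).d k ((ComplexShape.down ℕ).next k) x')
          = CM.d k ((ComplexShape.down ℕ).next k) ((φ a).f k x') := hcomm.symm
        _ = 0 := by rw [hx'2, hxd]
    obtain ⟨yy, hyy⟩ := aux_cyclesMk (K := (chainF R).obj (Xc a)) k x' hx'd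
    refine ⟨a, ((chainF R).obj (Xc a)).homologyπ k yy, ?_⟩
    show HomologicalComplex.homologyMap (φ a) k (((chainF R).obj (Xc a)).homologyπ k yy) = z
    rw [aux_pi_nat]
    have : HomologicalComplex.cyclesMap (φ a) k yy = xx := by
      apply aux_i_inj
      rw [aux_i_nat, hyy, hx'2]
    rw [this, hxx]
  · -- eventual injectivity
    intro a b x y hxy
    obtain ⟨xx, hxx⟩ := aux_pi_surj (K := (chainF R).obj (Xc a)) k x
    obtain ⟨yy, hyy⟩ := aux_pi_surj (K := (chainF R).obj (Xc b)) k y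
    have hxy2 : CM.homologyπ k (HomologicalComplex.cyclesMap (φ a) k xx) =
        CM.homologyπ k (HomologicalComplex.cyclesMap (φ b) k yy) := by
      rw [← aux_pi_nat, ← aux_pi_nat, hxx, hyy]
      exact hxy
    obtain ⟨w, hw⟩ := (aux_pi_eq k _ _).1 hxy2
    obtain ⟨c₁, hlift⟩ := exists_lift S hmono τ hincl hinclab hcr R
      ((ComplexShape.down ℕ).prev k) w
    obtain ⟨c₀, hac₀, hbc₀⟩ := directed_of (· ≤ ·) a b
    obtain ⟨c, hc₁c, hc₀c⟩ := directed_of (· ≤ ·) c₁ c₀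
    have hac : a ≤ c := le_trans hac₀ hc₀c
    have hbc : b ≤ c := le_trans hbc₀ hc₀c
    obtain ⟨w', hw'⟩ := hlift c hc₁c
    have hw'2 : (φ c).f ((ComplexShape.down ℕ).prev k) w' = w := hw'
    let ψa : (chainF R).obj (Xc a) ⟶ (chainF R).obj (Xc c) := (chainF R).map
      (@TopCat.ofHom _ _ (τ a) (τ c) (@ContinuousMap.mk _ _ (τ a) (τ c) (Set.inclusion (hmono hac)) (hinclab a c hac)))
    let ψb : (chainF R).obj (Xc b) ⟶ (chainF R).obj (Xc c) := (chainF R).map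
      (@TopCat.ofHom _ _ (τ b) (τ c) (@ContinuousMap.mk _ _ (τ b) (τ c) (Set.inclusion (hmono hbc)) (hinclab b c hbc)))
    have hfact_a : ∀ u, (φ a).f k u = (φ c).f k (ψa.f k u) := by
      have h1 : ι a = (@TopCat.ofHom _ _ (τ a) (τ c) (@ContinuousMap.mk _ _ (τ a) (τ c) (Set.inclusion (hmono hac))
          (hinclab a c hac)) : Xc a ⟶ Xc c) ≫ ι c := by
        apply ConcreteCategory.hom_ext; intro t; rfl
      intro u
      rw [show φ a = (chainF R).map (ι a) from rfl, h1, Functor.map_comp]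
      rfl
    have hfact_b : ∀ u, (φ b).f k u = (φ c).f k (ψb.f k u) := by
      have h1 : ι b = (@TopCat.ofHom _ _ (τ b) (τ c) (@ContinuousMap.mk _ _ (τ b) (τ c) (Set.inclusion (hmono hbc))
          (hinclab b c hbc)) : Xc b ⟶ Xc c) ≫ ι c := by
        apply ConcreteCategory.hom_ext; intro t; rfl
      intro u
      rw [show φ b = (chainF R).map (ι b) from rfl, h1, Functor.map_comp]
      rfl
    refine ⟨c, hac, hbc, ?_⟩
    show HomologicalComplex.homologyMap ψa k x = HomologicalComplex.homologyMap ψb k y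
    rw [← hxx, ← hyy, aux_pi_nat, aux_pi_nat]
    refine (aux_pi_eq k _ _).2 ⟨w', ?_⟩
    apply hφinj c k
    have hcomm := ConcreteCategory.congr_hom
      (HomologicalComplex.Hom.comm (φ c) ((ComplexShape.down ℕ).prev k) k) w'
    calc ((φ c).f k) (((chainF R).obj (Xc c)).d ((ComplexShape.down ℕ).prev k) k w')
        = CM.d ((ComplexShape.down ℕ).prev k) k ((φ c).f ((ComplexShape.down ℕ).prev k) w') :=
          hcomm.symm
      _ = CM.d ((ComplexShape.down ℕ).prev k) k w := by rw [hw'2]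
      _ = CM.iCycles k (HomologicalComplex.cyclesMap (φ a) k xx) -
            CM.iCycles k (HomologicalComplex.cyclesMap (φ b) k yy) := hw
      _ = (φ a).f k (((chainF R).obj (Xc a)).iCycles k xx) -
            (φ b).f k (((chainF R).obj (Xc b)).iCycles k yy) := by
            rw [aux_i_nat, aux_i_nat]
      _ = (φ c).f k (ψa.f k (((chainF R).obj (Xc a)).iCycles k xx)) -
            (φ c).f k (ψb.f k (((chainF R).obj (Xc b)).iCycles k yy)) := by
            rw [hfact_a, hfact_b]
      _ = ((φ c).f k) (((chainF R).obj (Xc c)).iCycles k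
              (HomologicalComplex.cyclesMap ψa k xx) -
            ((chainF R).obj (Xc c)).iCycles k (HomologicalComplex.cyclesMap ψb k yy)) := by
            rw [map_sub, aux_i_nat, aux_i_nat]
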